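/- For every d ≥ 1, every c ≥ 1 and every i ≥ 2 there exists a colouring C : {0,...,2_d(i^c)}^{d+1} → {0,...,i}^{64·d+2·c} such that C(x_1,...,x_{d+1}) ≰ C(x_2,...,x_{d+2}) for all x_1 < x_2 < ... < x_{d+2} ≤ 2_d(i^c), where ≤ on tuples is the coordinatewise order. -/

import Mathlib

/-- Tower function: `tower 0 i = i`, `tower (n+1) i = 2 ^ tower n i`. -/
def tower : ℕ → ℕ → ℕ
  | 0, i => i
  | n+1, i => 2 ^ tower n i

namespace ARAux

/-- Position of the most significant bit where `x` and `y` differ. -/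
def dlt (x y : ℕ) : ℕ := Nat.log 2 (x ^^^ y)

/-- Combined value: differing bit position together with the order sign. -/
def vv (x y : ℕ) : ℕ := 2 * dlt x y + (if x < y then 1 else 0)

lemma testBit_log_self {n : ℕ} (hn : n ≠ 0) : n.testBit (Nat.log 2 n) = true := by
  have h1 : 2 ^ Nat.log 2 n ≤ n := Nat.pow_log_le_self 2 hn
  have h2 : n < 2 ^ (Nat.log 2 n + 1) := Nat.lt_pow_succ_log_self (by norm_num) n
  have hdiv : n / 2 ^ Nat.log 2 n = 1 := by
    have hpos : 0 < 2 ^ Nat.log 2 n := Nat.pow_pos (by norm_num)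
    have hlow : 1 ≤ n / 2 ^ Nat.log 2 n := (Nat.le_div_iff_mul_le hpos).2 (by omega)
    have hhigh : n / 2 ^ Nat.log 2 n < 2 := by
      apply Nat.div_lt_of_lt_mul
      calc n < 2 ^ (Nat.log 2 n + 1) := h2
        _ = 2 ^ Nat.log 2 n * 2 := by rw [pow_succ]
    omega
  rw [Nat.testBit_eq_decide_div_mod_eq, hdiv]
  simp

lemma xor_ne_zero {x y : ℕ} (h : x ≠ y) : (x ^^^ y) ≠ 0 := by
  intro h0
  exact h (by rw [← Nat.xor_zero x, ← h0, ← Nat.xor_assoc, Nat.xor_self, Nat.zero_xor])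

lemma testBit_dlt_ne {x y : ℕ} (h : x ≠ y) :
    x.testBit (dlt x y) ≠ y.testBit (dlt x y) := by
  have ht := testBit_log_self (xor_ne_zero h)
  rw [Nat.testBit_xor] at ht
  unfold dlt
  intro heq
  rw [heq] at ht
  simp at ht

lemma testBit_eq_of_gt {x y k : ℕ} (hk : dlt x y < k) :
    x.testBit k = y.testBit k := by
  by_cases hxy : x = y
  · rw [hxy]
  unfold dlt at hk
  have hxor : (x ^^^ y) < 2 ^ k := by
    calc x ^^^ y < 2 ^ (Nat.log 2 (x ^^^ y) + 1) :=
          Nat.lt_pow_succ_log_self (by norm_num) _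
      _ ≤ 2 ^ k := Nat.pow_le_pow_right (by norm_num) (by omega)
  have hb := Nat.testBit_lt_two_pow hxor
  rw [Nat.testBit_xor] at hb
  revert hb
  cases hx : x.testBit k <;> cases hy : y.testBit k <;> simp

lemma dlt_comm (x y : ℕ) : dlt x y = dlt y x := by
  unfold dlt; rw [Nat.xor_comm]

lemma bits_of_lt {x y : ℕ} (h : x < y) :
    x.testBit (dlt x y) = false ∧ y.testBit (dlt x y) = true := by
  have hne := testBit_dlt_ne (Nat.ne_of_lt h)
  rcases hx : x.testBit (dlt x y) with _ | _
  · rcases hy : y.testBit (dlt x y) with _ | _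
    · rw [hx, hy] at hne; simp at hne
    · exact ⟨rfl, rfl⟩
  · rcases hy : y.testBit (dlt x y) with _ | _
    · exfalso
      have : y < x := Nat.lt_of_testBit (dlt x y) hy hx
        (fun j hj => (testBit_eq_of_gt (y := y) hj).symm)
      omega
    · rw [hx, hy] at hne; simp at hne

lemma vv_ne {x y z : ℕ} (hxy : x ≠ y) (hyz : y ≠ z) : vv x y ≠ vv y z := by
  intro heq
  unfold vv at heq
  by_cases h1 : x < y <;> by_cases h2 : y < z
  · simp only [h1, h2, if_pos] at heq
    have hdlt : dlt x y = dlt y z := by omega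
    have hb1 := (bits_of_lt h1).2
    have hb2 := (bits_of_lt h2).1
    rw [hdlt] at hb1
    rw [hb1] at hb2
    simp at hb2
  · simp only [h1, h2, if_pos, if_neg, not_false_iff] at heq
    omega
  · simp only [h1, h2, if_pos, if_neg, not_false_iff] at heq
    omega
  · simp only [h1, h2, if_neg, not_false_iff] at heq
    have hdlt : dlt x y = dlt y z := by omega
    have hyx : y < x := by omega
    have hzy : z < y := by omega
    have hb1 := (bits_of_lt hyx).1
    have hb2 := (bits_of_lt hzy).2
    rw [dlt_comm y x] at hb1
    rw [dlt_comm z y] at hb2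
    rw [hdlt] at hb1
    rw [hb1] at hb2
    simp at hb2

lemma vv_lt {x y t : ℕ} (hx : x < 2 ^ t) (hy : y < 2 ^ t) (hne : x ≠ y) :
    vv x y < 2 * t := by
  have hxor : x ^^^ y < 2 ^ t := Nat.xor_lt_two_pow hx hy
  have hlog : dlt x y < t := Nat.log_lt_of_lt_pow (xor_ne_zero hne) hxor
  unfold vv
  split <;> omega

/-- One step of the colouring recursion. -/
def stepv {k : ℕ} (x : Fin (k+2) → ℕ) : Fin (k+1) → ℕ :=
  fun j => vv (x j.castSucc) (x j.succ)

/-- Iterated colouring down to a single number. -/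
def hcol : (k : ℕ) → (Fin (k+1) → ℕ) → ℕ
  | 0, x => x 0
  | k+1, x => hcol k (stepv x)

/-- Adjacent entries distinct. -/
def AD {n : ℕ} (x : Fin (n+1) → ℕ) : Prop :=
  ∀ j : Fin n, x j.castSucc ≠ x j.succ

lemma AD_step {k : ℕ} {x : Fin (k+2) → ℕ} (h : AD x) : AD (stepv x) := by
  intro j
  show vv (x j.castSucc.castSucc) (x j.castSucc.succ)
      ≠ vv (x j.succ.castSucc) (x j.succ.succ)
  rw [Fin.succ_castSucc]
  exact vv_ne (h j.castSucc) (h j.succ)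

lemma step_front {k : ℕ} (x : Fin (k+3) → ℕ) :
    stepv (fun m : Fin (k+2) => x m.castSucc) = fun m => stepv x m.castSucc := by
  funext j
  show vv (x j.castSucc.castSucc) (x j.succ.castSucc)
      = vv (x j.castSucc.castSucc) (x j.castSucc.succ)
  rw [Fin.succ_castSucc]

lemma step_back {k : ℕ} (x : Fin (k+3) → ℕ) :
    stepv (fun m : Fin (k+2) => x m.succ) = fun m => stepv x m.succ := by
  funext j
  show vv (x j.castSucc.succ) (x j.succ.succ)
      = vv (x j.succ.castSucc) (x j.succ.succ)
  rw [Fin.succ_castSucc]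

lemma hcol_ne : ∀ (k : ℕ) (x : Fin (k+2) → ℕ), AD x →
    hcol k (fun m => x m.castSucc) ≠ hcol k (fun m => x m.succ) := by
  intro k
  induction k with
  | zero =>
    intro x hx
    exact hx 0
  | succ k ih =>
    intro x hx
    show hcol k (stepv fun m => x m.castSucc) ≠ hcol k (stepv fun m => x m.succ)
    rw [step_front, step_back]
    exact ih (stepv x) (AD_step hx)

lemma hcol_lt : ∀ (k a e : ℕ) (x : Fin (k+1) → ℕ), AD x →
    (∀ j, x j < 2 * (tower k a + e)) → hcol k x < 2 * (a + e + 2 * k) := by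
  intro k
  induction k with
  | zero =>
    intro a e x _ hx
    have h := hx 0
    have ht : tower 0 a = a := rfl
    rw [ht] at h
    show x 0 < 2 * (a + e + 2 * 0)
    omega
  | succ k ih =>
    intro a e x hx hb
    have hT : ∀ j, x j < 2 ^ (tower k a + e + 2) := by
      intro j
      have h1 := hb j
      have h2 : 2 * (tower (k+1) a + e) ≤ 2 ^ (tower k a + e + 2) := by
        have he : e < 2 ^ e := Nat.lt_two_pow_self (n := e)
        have hT1 : 1 ≤ 2 ^ tower k a := Nat.one_le_two_pow
        have : tower (k+1) a = 2 ^ tower k a := rfl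
        rw [this, pow_add, pow_add]
        nlinarith [pow_pos (by norm_num : (0:ℕ) < 2) e,
          pow_pos (by norm_num : (0:ℕ) < 2) (tower k a)]
      omega
    have hstep : ∀ j, stepv x j < 2 * (tower k a + (e + 2)) := by
      intro j
      have := vv_lt (hT j.castSucc) (hT j.succ) (hx j)
      calc stepv x j < 2 * (tower k a + e + 2) := this
        _ = 2 * (tower k a + (e + 2)) := by ring
    have := ih a (e + 2) (stepv x) (AD_step hx) hstep
    calc hcol (k+1) x = hcol k (stepv x) := rfl
      _ < 2 * (a + (e + 2) + 2 * k) := this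
      _ = 2 * (a + e + 2 * (k + 1)) := by ring

lemma digits_eq {B : ℕ} (hB : 0 < B) :
    ∀ (L a b : ℕ), a < B ^ L → b < B ^ L →
      (∀ t, a / B ^ t % B = b / B ^ t % B) → a = b := by
  intro L
  induction L with
  | zero =>
    intro a b ha hb _
    simp at ha hb
    omega
  | succ L ih =>
    intro a b ha hb hdig
    have h0 : a % B = b % B := by
      have := hdig 0
      simpa using this
    have hdiv : a / B = b / B := by
      apply ih
      · rw [Nat.div_lt_iff_lt_mul hB]
        calc a < B ^ (L+1) := ha
          _ = B ^ L * B := by rw [pow_succ]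
      · rw [Nat.div_lt_iff_lt_mul hB]
        calc b < B ^ (L+1) := hb
          _ = B ^ L * B := by rw [pow_succ]
      · intro t
        have h1 : a / B / B ^ t = a / B ^ (t+1) := by
          rw [Nat.div_div_eq_div_mul, ← pow_succ']
        have h2 : b / B / B ^ t = b / B ^ (t+1) := by
          rw [Nat.div_div_eq_div_mul, ← pow_succ']
        rw [h1, h2]
        exact hdig (t+1)
    rw [← Nat.div_add_mod a B, ← Nat.div_add_mod b B, hdiv, h0]

end ARAux

open ARAux in
/-- Lower bound colouring for adjacent Ramsey with constant parameter:
a colouring `C : {0,…,2_d(i^c)}^{d+1} → {0,…,i}^{64·d+2·c}` whose values on adjacent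
increasing tuples are never coordinatewise `≤`. -/
theorem AR_lower_colouring_not_le (d c i : ℕ) (hd : 1 ≤ d) (hc : 1 ≤ c) (hi : 2 ≤ i) :
    ∃ C : (Fin (d+1) → ℕ) → (Fin (64*d + 2*c) → ℕ),
      (∀ x : Fin (d+1) → ℕ, (∀ k, x k ≤ tower d (i^c)) → ∀ j, C x j ≤ i) ∧
      (∀ x : Fin (d+2) → ℕ, StrictMono x → x (Fin.last (d+1)) ≤ tower d (i^c) →
        ¬ ∀ j, C (fun k => x k.castSucc) j ≤ C (fun k => x k.succ) j) := by
  set L := 32 * d + c with hL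
  set B := i + 1 with hBdef
  have hB : 0 < B := by omega
  -- digit extraction
  set dig : (Fin (d+1) → ℕ) → ℕ → ℕ := fun x t => hcol d x / B ^ t % B with hdig
  refine ⟨fun x j => if (j : ℕ) < L then dig x (j : ℕ) else i - dig x ((j : ℕ) - L), ?_, ?_⟩
  · intro x _ j
    have hmod : ∀ t, dig x t ≤ i := by
      intro t
      have h1 : dig x t = hcol d x / B ^ t % B := by rw [hdig]
      have h2 := Nat.mod_lt (hcol d x / B ^ t) hB
      omega
    show (if (j : ℕ) < L then dig x (j : ℕ) else i - dig x ((j : ℕ) - L)) ≤ i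
    split
    · exact hmod _
    · omega
  · intro x hmono hlast hall
    -- all entries bounded
    have hbnd : ∀ k : Fin (d+2), x k ≤ tower d (i^c) := fun k =>
      le_trans (hmono.monotone (Fin.le_last k)) hlast
    -- adjacency-distinctness
    have hAD : AD x := fun j => Nat.ne_of_lt (hmono (Fin.castSucc_lt_succ (i := j)))
    have hADf : AD (fun k : Fin (d+1) => x k.castSucc) := by
      intro j
      show x j.castSucc.castSucc ≠ x j.succ.castSucc
      exact fun h => Nat.ne_of_lt
        (hmono (by exact_mod_cast Fin.castSucc_lt_castSucc_iff.2 (Fin.castSucc_lt_succ (i := j)))) h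
    have hADb : AD (fun k : Fin (d+1) => x k.succ) := by
      intro j
      show x j.castSucc.succ ≠ x j.succ.succ
      exact Nat.ne_of_lt (hmono (by
        rw [Fin.succ_castSucc]
        exact Fin.castSucc_lt_succ (i := j.succ)))
    -- value bound
    have hval : ∀ y : Fin (d+1) → ℕ, AD y → (∀ k, y k ≤ tower d (i^c)) →
        hcol d y < B ^ L := by
      intro y hADy hy
      have h1 : hcol d y < 2 * (i^c + 1 + 2 * d) := by
        have := hcol_lt d (i^c) 1 y hADy (fun j => by have := hy j; omega)
        omega
      have h2 : 2 * (i^c + 1 + 2 * d) ≤ B ^ L := by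
        have hic : 1 ≤ i ^ c := Nat.one_le_pow _ _ (by omega)
        have hd2 : 4 * d + 4 ≤ 2 ^ (32 * d) := by
          have h3 : d + 1 ≤ 2 ^ d := by
            have := Nat.lt_two_pow_self (n := d)
            omega
          calc 4 * d + 4 = 4 * (d + 1) := by ring
            _ ≤ 4 * 2 ^ d := by omega
            _ = 2 ^ (d + 2) := by rw [pow_add]; ring
            _ ≤ 2 ^ (32 * d) := Nat.pow_le_pow_right (by norm_num) (by omega)
        calc 2 * (i^c + 1 + 2 * d) ≤ i^c * (4 * d + 4) := by nlinarith
          _ ≤ i^c * 2 ^ (32 * d) := Nat.mul_le_mul_left _ hd2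
          _ ≤ B^c * B ^ (32 * d) := Nat.mul_le_mul
              (Nat.pow_le_pow_left (by omega) _) (Nat.pow_le_pow_left (by omega) _)
          _ = B ^ L := by rw [← pow_add, hL]; ring_nf
      omega
    have hvf := hval _ hADf (fun k => hbnd _)
    have hvb := hval _ hADb (fun k => hbnd _)
    -- digits equal
    have hde : ∀ t, dig (fun k => x k.castSucc) t = dig (fun k => x k.succ) t := by
      intro t
      by_cases ht : t < L
      · have hj1 : t < 64 * d + 2 * c := by omega
        have hj2 : t + L < 64 * d + 2 * c := by omega
        have h1 : dig (fun k => x k.castSucc) t ≤ dig (fun k => x k.succ) t := by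
          have := hall ⟨t, hj1⟩
          simpa [ht] using this
        have h2 : i - dig (fun k => x k.castSucc) t ≤ i - dig (fun k => x k.succ) t := by
          have := hall ⟨t + L, hj2⟩
          have hnl : ¬ (t + L < L) := by omega
          simpa [hnl] using this
        have hmf : dig (fun k => x k.castSucc) t ≤ i := by
          have he : dig (fun k => x k.castSucc) t
              = hcol d (fun k => x k.castSucc) / B ^ t % B := by rw [hdig]
          have := Nat.mod_lt (hcol d (fun k => x k.castSucc) / B ^ t) hB
          omega
        have hmb : dig (fun k => x k.succ) t ≤ i := by
          have he : dig (fun k => x k.succ) t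
              = hcol d (fun k => x k.succ) / B ^ t % B := by rw [hdig]
          have := Nat.mod_lt (hcol d (fun k => x k.succ) / B ^ t) hB
          omega
        omega
      · have hz : ∀ y : Fin (d+1) → ℕ, hcol d y < B ^ L → dig y t = 0 := by
          intro y hy
          have : hcol d y < B ^ t :=
            lt_of_lt_of_le hy (Nat.pow_le_pow_right (by omega) (by omega))
          simp [hdig, Nat.div_eq_of_lt this]
        rw [hz _ hvf, hz _ hvb]
    -- conclude equality, contradiction
    have heq : hcol d (fun k => x k.castSucc) = hcol d (fun k => x k.succ) :=
      digits_eq hB L _ _ hvf hvb hde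
    exact hcol_ne d x hAD heq
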